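/- arXiv:2512.09305 — 2 statements merged into one kernel-verified Lean document; each statement's English description precedes it below -/
import Mathlib

section
/- Let Z have truncated Gamma density g(z) ∝ z^{n−1} e^{−z} on (ξ, ∞) with ξ ≥ 0 and integer n ≥ 3. Then E[Z^{−2}] is nonincreasing in ξ on [0,∞); in particular E_ξ[Z^{−2}] ≤ E_0[Z^{−2}] = 1/((n−1)(n−2)). -/
open MeasureTheory Set

private lemma myIntOn (k : ℕ) {ξ : ℝ} (hξ : 0 ≤ ξ) :
    IntegrableOn (fun z : ℝ => z ^ k * Real.exp (-z)) (Ioi ξ) := by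
  have h := Real.GammaIntegral_convergent (s := (k : ℝ) + 1) (by positivity)
  have h2 : IntegrableOn (fun z : ℝ => z ^ k * Real.exp (-z)) (Ioi 0) := by
    refine h.congr_fun (fun x hx => ?_) measurableSet_Ioi
    rw [add_sub_cancel_right]; dsimp only; rw [Real.rpow_natCast]; ring
  exact h2.mono_set (Ioi_subset_Ioi hξ)

private lemma myIntVal (k : ℕ) :
    ∫ z in Ioi (0:ℝ), z ^ k * Real.exp (-z) = (Nat.factorial k : ℝ) := by
  have h := Real.Gamma_nat_eq_factorial k
  rw [Real.Gamma_eq_integral (by positivity : (0:ℝ) < (k : ℝ) + 1)] at h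
  rw [← h]
  refine setIntegral_congr_fun measurableSet_Ioi fun x hx => ?_
  rw [add_sub_cancel_right, Real.rpow_natCast]; ring

private lemma myIntPos (k : ℕ) {ξ : ℝ} (hξ : 0 ≤ ξ) :
    0 < ∫ z in Ioi ξ, z ^ k * Real.exp (-z) := by
  rw [setIntegral_pos_iff_support_of_nonneg_ae]
  · have hsub : Ioi ξ ⊆ Function.support (fun z : ℝ => z ^ k * Real.exp (-z)) ∩ Ioi ξ := by
      intro z hz
      refine ⟨?_, hz⟩
      have hz0 : 0 < z := lt_of_le_of_lt hξ hz
      simp only [Function.mem_support]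
      positivity
    calc (0 : ENNReal) < volume (Ioi ξ) := by simp
      _ ≤ _ := measure_mono hsub
  · filter_upwards [ae_restrict_mem measurableSet_Ioi] with z hz
    have hz0 : 0 < z := lt_of_le_of_lt hξ hz
    positivity
  · exact myIntOn k hξ

theorem stmt4 (n : ℕ) (hn : 3 ≤ n) :
    let E : ℝ → ℝ := fun ξ =>
      (∫ z in Ioi ξ, z ^ (n - 3) * Real.exp (-z)) /
        (∫ z in Ioi ξ, z ^ (n - 1) * Real.exp (-z))
    AntitoneOn E (Ici 0) ∧
      (∀ ξ : ℝ, 0 ≤ ξ → E ξ ≤ 1 / (((n : ℝ) - 1) * ((n : ℝ) - 2))) ∧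
      E 0 = 1 / (((n : ℝ) - 1) * ((n : ℝ) - 2)) := by
  intro E
  have hpow : n - 1 = (n - 3) + 2 := by omega
  have hanti : AntitoneOn E (Ici 0) := by
    intro a ha b hb hab
    simp only [mem_Ici] at ha hb
    have hGa := myIntPos (n - 1) ha
    have hGb := myIntPos (n - 1) hb
    have hFb := (setIntegral_nonneg measurableSet_Ioi
      (fun z hz => by have : 0 < z := lt_of_le_of_lt hb hz; positivity) :
      (0:ℝ) ≤ ∫ z in Ioi b, z ^ (n - 3) * Real.exp (-z))
    -- decompose integrals over Ioi a into Ioc a b plus Ioi b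
    have hdec : ∀ k : ℕ, (∫ z in Ioi a, z ^ k * Real.exp (-z)) =
        (∫ z in Ioc a b, z ^ k * Real.exp (-z)) + ∫ z in Ioi b, z ^ k * Real.exp (-z) := by
      intro k
      rw [← Ioc_union_Ioi_eq_Ioi hab,
        setIntegral_union (Ioc_disjoint_Ioi le_rfl) measurableSet_Ioi
          ((myIntOn k ha).mono_set Ioc_subset_Ioi_self) (myIntOn k hb)]
    have hA := (setIntegral_nonneg measurableSet_Ioc
      (fun z hz => by have : 0 < z := lt_of_le_of_lt ha hz.1; positivity) :
      (0:ℝ) ≤ ∫ z in Ioc a b, z ^ (n - 3) * Real.exp (-z))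
    -- pointwise bound on Ioc a b
    have hBA : (∫ z in Ioc a b, z ^ (n - 1) * Real.exp (-z)) ≤
        b ^ 2 * ∫ z in Ioc a b, z ^ (n - 3) * Real.exp (-z) := by
      rw [← integral_const_mul]
      refine setIntegral_mono_on ((myIntOn (n-1) ha).mono_set Ioc_subset_Ioi_self)
        (((myIntOn (n-3) ha).mono_set Ioc_subset_Ioi_self).const_mul _)
        measurableSet_Ioc (fun z hz => ?_)
      have hz0 : 0 ≤ z := le_trans ha hz.1.le
      have hz2 : z ^ 2 ≤ b ^ 2 := pow_le_pow_left₀ hz0 hz.2 2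
      calc z ^ (n-1) * Real.exp (-z) = z ^ 2 * (z ^ (n-3) * Real.exp (-z)) := by
            rw [hpow, pow_add]; ring
        _ ≤ b ^ 2 * (z ^ (n-3) * Real.exp (-z)) := by
            have : (0:ℝ) ≤ z ^ (n-3) * Real.exp (-z) := by positivity
            exact mul_le_mul_of_nonneg_right hz2 this
    -- pointwise bound on Ioi b
    have hFG : b ^ 2 * (∫ z in Ioi b, z ^ (n - 3) * Real.exp (-z)) ≤
        ∫ z in Ioi b, z ^ (n - 1) * Real.exp (-z) := by
      rw [← integral_const_mul]
      refine setIntegral_mono_on ((myIntOn (n-3) hb).const_mul _) (myIntOn (n-1) hb)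
        measurableSet_Ioi (fun z hz => ?_)
      have hz0 : 0 ≤ z := le_trans hb hz.le
      have hz2 : b ^ 2 ≤ z ^ 2 := pow_le_pow_left₀ hb hz.le 2
      calc b ^ 2 * (z ^ (n-3) * Real.exp (-z)) ≤ z ^ 2 * (z ^ (n-3) * Real.exp (-z)) := by
            have : (0:ℝ) ≤ z ^ (n-3) * Real.exp (-z) := by positivity
            exact mul_le_mul_of_nonneg_right hz2 this
        _ = z ^ (n-1) * Real.exp (-z) := by rw [hpow, pow_add]; ring
    show E b ≤ E a
    simp only [E]
    rw [div_le_div_iff₀ hGb hGa, hdec (n-3), hdec (n-1)]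
    nlinarith [mul_le_mul_of_nonneg_left hBA hFb, mul_le_mul_of_nonneg_right hFG hA]
  obtain ⟨m, rfl⟩ : ∃ m, n = m + 3 := ⟨n - 3, by omega⟩
  have hE0 : E 0 = 1 / ((((m + 3 : ℕ) : ℝ) - 1) * (((m + 3 : ℕ) : ℝ) - 2)) := by
    show (∫ z in Ioi (0:ℝ), z ^ m * Real.exp (-z)) /
        (∫ z in Ioi (0:ℝ), z ^ (m + 2) * Real.exp (-z)) = _
    rw [myIntVal m, myIntVal (m + 2)]
    have hf : (Nat.factorial (m + 2) : ℝ)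
        = ((m:ℝ) + 2) * ((m:ℝ) + 1) * (Nat.factorial m : ℝ) := by
      rw [Nat.factorial_succ, Nat.factorial_succ]; push_cast; ring
    have hm : (0:ℝ) < (Nat.factorial m : ℝ) := by positivity
    rw [hf, mul_comm (((m:ℝ) + 2) * ((m:ℝ) + 1)), ← div_div, div_self hm.ne']
    push_cast
    rw [one_div, one_div]
    congr 1
    ring
  refine ⟨hanti, fun ξ hξ => ?_, hE0⟩
  rw [← hE0]
  exact hanti (self_mem_Ici) hξ hξ
end

section
/- Let H be a probability measure on (0,∞) and ρ ≤ 0, c > 0. Then ∫ τ e^{cρτ} dH(τ) / ∫ τ^{−1} e^{cρτ} dH(τ) ≤ ∫ τ dH(τ) / ∫ τ^{−1} dH(τ), assuming all integrals are finite and positive. -/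
open MeasureTheory

theorem stmt6 (H : Measure ℝ) [IsProbabilityMeasure H]
    (hpos : ∀ᵐ τ ∂H, 0 < τ) (ρ c : ℝ) (hρ : ρ ≤ 0) (hc : 0 < c)
    (h1 : Integrable (fun τ => τ) H)
    (h2 : Integrable (fun τ => τ⁻¹) H)
    (h3 : Integrable (fun τ => τ * Real.exp (c * ρ * τ)) H)
    (h4 : Integrable (fun τ => τ⁻¹ * Real.exp (c * ρ * τ)) H)
    (hd0 : 0 < ∫ τ, τ⁻¹ ∂H)
    (hdk : 0 < ∫ τ, τ⁻¹ * Real.exp (c * ρ * τ) ∂H) :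
    (∫ τ, τ * Real.exp (c * ρ * τ) ∂H) /
        (∫ τ, τ⁻¹ * Real.exp (c * ρ * τ) ∂H) ≤
      (∫ τ, τ ∂H) / (∫ τ, τ⁻¹ ∂H) := by
  set a := c * ρ with ha
  rw [div_le_div_iff₀ hdk hd0]
  -- key: ∫ g * ∫ inv ≤ ∫ id * ∫ k  where g x = x e^{ax}, k x = x⁻¹ e^{ax}
  set g : ℝ → ℝ := fun x => x * Real.exp (a * x) with hg
  set k : ℝ → ℝ := fun x => x⁻¹ * Real.exp (a * x) with hk
  have hΦ : ∀ x y : ℝ, 0 < x → 0 < y →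
      g x * y⁻¹ + g y * x⁻¹ ≤ x * k y + y * k x := by
    intro x y hx hy
    have hxy : 0 ≤ (Real.exp (a * x) - Real.exp (a * y)) * (y - x) := by
      rcases le_total x y with h | h
      · have : Real.exp (a * y) ≤ Real.exp (a * x) := by
          apply Real.exp_le_exp.2
          nlinarith [mul_nonpos_of_nonpos_of_nonneg (mul_nonpos_of_nonneg_of_nonpos hc.le hρ) (sub_nonneg.2 h)]
        nlinarith
      · have : Real.exp (a * x) ≤ Real.exp (a * y) := by
          apply Real.exp_le_exp.2
          nlinarith [mul_nonpos_of_nonpos_of_nonneg (mul_nonpos_of_nonneg_of_nonpos hc.le hρ) (sub_nonneg.2 h)]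
        nlinarith
    rw [← sub_nonneg]
    have heq : x * k y + y * k x - (g x * y⁻¹ + g y * x⁻¹)
        = (((Real.exp (a * x) - Real.exp (a * y)) * (y - x)) * (y + x)) / (x * y) := by
      simp only [hg, hk]
      field_simp
      ring
    rw [heq]
    positivity
  -- integrability on product
  have hI1 : Integrable (fun z : ℝ × ℝ => z.1 * k z.2) (H.prod H) := h1.mul_prod h4
  have hI2 : Integrable (fun z : ℝ × ℝ => z.2 * k z.1) (H.prod H) := by
    have := h4.mul_prod h1
    simpa [mul_comm] using this
  have hI3 : Integrable (fun z : ℝ × ℝ => g z.1 * z.2⁻¹) (H.prod H) := h3.mul_prod h2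
  have hI4 : Integrable (fun z : ℝ × ℝ => g z.2 * z.1⁻¹) (H.prod H) := by
    have := h2.mul_prod h3
    simpa [mul_comm] using this
  have haep : ∀ᵐ z ∂(H.prod H), 0 < z.1 ∧ 0 < z.2 := by
    have hms : MeasurableSet {z : ℝ × ℝ | 0 < z.1 ∧ 0 < z.2} :=
      (measurable_fst measurableSet_Ioi).inter (measurable_snd measurableSet_Ioi)
    rw [MeasureTheory.Measure.ae_prod_iff_ae_ae hms]
    filter_upwards [hpos] with x hx
    filter_upwards [hpos] with y hy
    exact ⟨hx, hy⟩
  have hmono : ∫ z : ℝ × ℝ, (g z.1 * z.2⁻¹ + g z.2 * z.1⁻¹) ∂(H.prod H)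
      ≤ ∫ z : ℝ × ℝ, (z.1 * k z.2 + z.2 * k z.1) ∂(H.prod H) := by
    apply integral_mono_ae (hI3.add hI4) (hI1.add hI2)
    filter_upwards [haep] with z hz
    exact hΦ z.1 z.2 hz.1 hz.2
  rw [integral_add hI3 hI4, integral_add hI1 hI2] at hmono
  have e1 : ∫ z : ℝ × ℝ, g z.1 * z.2⁻¹ ∂(H.prod H) = (∫ x, g x ∂H) * ∫ x, x⁻¹ ∂H :=
    integral_prod_mul g (fun x => x⁻¹)
  have e2 : ∫ z : ℝ × ℝ, g z.2 * z.1⁻¹ ∂(H.prod H) = (∫ x, x⁻¹ ∂H) * ∫ x, g x ∂H := by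
    have := integral_prod_mul (μ := H) (ν := H) (fun x : ℝ => x⁻¹) g
    simpa [mul_comm] using this
  have e3 : ∫ z : ℝ × ℝ, z.1 * k z.2 ∂(H.prod H) = (∫ x, x ∂H) * ∫ x, k x ∂H :=
    integral_prod_mul (fun x => x) k
  have e4 : ∫ z : ℝ × ℝ, z.2 * k z.1 ∂(H.prod H) = (∫ x, k x ∂H) * ∫ x, x ∂H := by
    have := integral_prod_mul (μ := H) (ν := H) k (fun x : ℝ => x)
    simpa [mul_comm] using this
  rw [e1, e2, e3, e4] at hmono
  nlinarith [hmono]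
end
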